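/- Contraction is a module homomorphism: let e ∈ V be isotropic with e ∉ F, and let π_e: Cl(V)f → Cl(V_e)f̄ be the contraction map, defined on Cl⁺(V)f by af ↦ image of ½((−1)^{n−1}eaf + afe) in Cl(V_e)f̄ (and with sign (−1)ⁿ on Cl⁻(V)f). Then π_e is a homomorphism of Cl(e^⊥)-representations: for all v ∈ e^⊥ and a ∈ Cl(V), π_e(v·af) = v̄·π_e(af). -/

import Mathlib

open CliffordAlgebra

/-- The bilinear form `(v|w) = ½(q(v+w) − q(v) − q(w))` associated to `q`. -/
noncomputable def halfPolar {K V : Type*} [Field K] [CharZero K] [AddCommGroup V] [Module K V]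
    (q : QuadraticForm K V) : V →ₗ[K] Module.Dual K V :=
  (2⁻¹ : K) • (QuadraticMap.polarBilin q)

section Aux
set_option linter.unusedSectionVars false
variable {K V : Type*} [Field K] [CharZero K] [AddCommGroup V] [Module K V]
  (q : QuadraticForm K V)

private lemma aux_anticomm {u w : V} (h : QuadraticMap.polar q u w = 0) :
    ι q u * ι q w = -(ι q w * ι q u) := by
  have := ι_mul_ι_add_swap (Q := q) u w
  rw [h, map_zero] at this
  exact eq_neg_of_add_eq_zero_left this

private lemma aux_inv_mem (S : Set V) :
    ∀ z ∈ Algebra.adjoin K (ι q '' S), involute z ∈ Algebra.adjoin K (ι q '' S) := by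
  intro z hz
  induction hz using Algebra.adjoin_induction with
  | mem x hx =>
    obtain ⟨w, hw, rfl⟩ := hx
    rw [involute_ι]
    exact neg_mem (Algebra.subset_adjoin ⟨w, hw, rfl⟩)
  | algebraMap r => rw [involute.commutes]; exact algebraMap_mem _ r
  | add x y hx hy ihx ihy => rw [map_add]; exact add_mem ihx ihy
  | mul x y hx hy ihx ihy => rw [map_mul]; exact mul_mem ihx ihy

private lemma aux_delta_mul (u : V) (z₁ z₂ : CliffordAlgebra q) :
    ι q u * (z₁ * z₂) - involute (z₁ * z₂) * ι q u
      = (ι q u * z₁ - involute z₁ * ι q u) * z₂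
        + involute z₁ * (ι q u * z₂ - involute z₂ * ι q u) := by
  rw [map_mul]; noncomm_ring

private lemma aux_delta_iota (u w : V) :
    ι q u * ι q w - involute (ι q w) * ι q u
      = algebraMap K _ (QuadraticMap.polar q u w) := by
  rw [involute_ι, ← ι_mul_ι_add_swap]; noncomm_ring

private lemma aux_delta_mem (u : V) (S : Set V) :
    ∀ z ∈ Algebra.adjoin K (ι q '' S),
      ι q u * z - involute z * ι q u ∈ Algebra.adjoin K (ι q '' S) := by
  intro z hz
  induction hz using Algebra.adjoin_induction with
  | mem x hx =>
    obtain ⟨w, hw, rfl⟩ := hx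
    rw [aux_delta_iota]
    exact algebraMap_mem _ _
  | algebraMap r =>
    rw [involute.commutes, Algebra.commutes, sub_self]
    exact zero_mem _
  | add x y hx hy ihx ihy =>
    rw [map_add, add_mul, mul_add]
    have : ι q u * x + ι q u * y - (involute x * ι q u + involute y * ι q u)
        = (ι q u * x - involute x * ι q u) + (ι q u * y - involute y * ι q u) := by abel
    rw [this]; exact add_mem ihx ihy
  | mul x y hx hy ihx ihy =>
    rw [aux_delta_mul]
    exact add_mem (mul_mem ihx hy) (mul_mem (aux_inv_mem q S x hx) ihy)

private lemma aux_delta_invol (u : V) (z : CliffordAlgebra q) :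
    ι q u * involute z - involute (involute z) * ι q u
      = -(involute (ι q u * z - involute z * ι q u)) := by
  rw [involute_involute, map_sub, map_mul, map_mul, involute_ι, involute_involute]
  noncomm_ring

private lemma aux_step (e fn : V) (hFF : ι q fn * ι q fn = 0)
    (σ c : K) (hσ : σ * σ = 1)
    {x y : CliffordAlgebra q}
    (hx : x ∈ Algebra.adjoin K (ι q '' {w : V | QuadraticMap.polar q e w = 0}))
    (hy : y ∈ Algebra.adjoin K (ι q '' {w : V | QuadraticMap.polar q e w = 0}))
    (hax : involute x = σ • x) (hay : involute y = (-σ) • y)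
    {w : V} (hw : QuadraticMap.polar q e w = 0) :
    ∃ x' y', x' ∈ Algebra.adjoin K (ι q '' {w : V | QuadraticMap.polar q e w = 0}) ∧
      y' ∈ Algebra.adjoin K (ι q '' {w : V | QuadraticMap.polar q e w = 0}) ∧
      (ι q w + c • ι q fn) * (x + y * ι q fn) = x' + y' * ι q fn ∧
      involute x' = (-σ) • x' ∧ involute y' = σ • y' := by
  set S : Set V := {w : V | QuadraticMap.polar q e w = 0} with hS
  have hwX : ι q w ∈ Algebra.adjoin K (ι q '' S) := Algebra.subset_adjoin ⟨w, hw, rfl⟩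
  have hδx := aux_delta_mem q fn S x hx
  have hδy := aux_delta_mem q fn S y hy
  -- involute of delta
  have hinvδ : ∀ z : CliffordAlgebra q, involute z = σ • z →
      involute (ι q fn * z - involute z * ι q fn)
        = (-σ) • (ι q fn * z - involute z * ι q fn) := by
    intro z hz
    have h := aux_delta_invol q fn z
    rw [involute_involute] at h
    have h2 : involute (ι q fn * z - involute z * ι q fn)
        = -(ι q fn * involute z - z * ι q fn) := by rw [h, neg_neg]
    rw [h2]
    simp only [hz]
    simp only [mul_smul_comm, smul_mul_assoc, smul_sub, smul_add, smul_smul, neg_smul, smul_neg, neg_sub, neg_neg, neg_mul, mul_neg]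
    match_scalars <;> first | ring1 | linear_combination hσ | linear_combination -hσ | linear_combination c*hσ | linear_combination (-c)*hσ | linear_combination (c*σ)*hσ | linear_combination (-(c*σ))*hσ
  have hinvδ' : ∀ z : CliffordAlgebra q, involute z = (-σ) • z →
      involute (ι q fn * z - involute z * ι q fn)
        = σ • (ι q fn * z - involute z * ι q fn) := by
    intro z hz
    have h := aux_delta_invol q fn z
    rw [involute_involute] at h
    have h2 : involute (ι q fn * z - involute z * ι q fn)
        = -(ι q fn * involute z - z * ι q fn) := by rw [h, neg_neg]
    rw [h2]
    simp only [hz]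
    simp only [mul_smul_comm, smul_mul_assoc, smul_sub, smul_add, smul_smul, neg_smul, smul_neg, neg_sub, neg_neg, neg_mul, mul_neg]
    match_scalars <;> first | ring1 | linear_combination hσ | linear_combination -hσ | linear_combination c*hσ | linear_combination (-c)*hσ | linear_combination (c*σ)*hσ | linear_combination (-(c*σ))*hσ
  refine ⟨ι q w * x + c • (ι q fn * x - involute x * ι q fn),
    ι q w * y + c • (ι q fn * y - involute y * ι q fn) + (c * σ) • x,
    add_mem (mul_mem hwX hx) (Subalgebra.smul_mem _ hδx _),
    add_mem (add_mem (mul_mem hwX hy) (Subalgebra.smul_mem _ hδy _))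
      (Subalgebra.smul_mem _ hx _), ?_, ?_, ?_⟩
  · -- the product identity
    simp only [hax, hay]
    simp only [add_mul, mul_add, sub_mul, smul_mul_assoc, mul_smul_comm, smul_sub,
      smul_smul, neg_smul, smul_neg, mul_assoc]
    simp only [hFF, mul_zero, smul_zero, neg_zero, add_zero, sub_zero, zero_add]
    match_scalars <;> first | ring1 | linear_combination hσ | linear_combination -hσ | linear_combination c*hσ | linear_combination (-c)*hσ | linear_combination (c*σ)*hσ | linear_combination (-(c*σ))*hσ
  · rw [map_add, map_mul, involute_ι, map_smul, hinvδ x hax]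
    simp only [hax]
    simp only [mul_smul_comm, smul_mul_assoc, smul_sub, smul_add, smul_smul, neg_smul, smul_neg, neg_sub, neg_neg, neg_mul, mul_neg]
    match_scalars <;> first | ring1 | linear_combination hσ | linear_combination -hσ | linear_combination c*hσ | linear_combination (-c)*hσ | linear_combination (c*σ)*hσ | linear_combination (-(c*σ))*hσ
  · rw [map_add, map_add, map_mul, involute_ι, map_smul, map_smul, hinvδ' y hay]
    simp only [hay, hax]
    simp only [mul_smul_comm, smul_mul_assoc, smul_sub, smul_add, smul_smul, neg_smul, smul_neg, neg_sub, neg_neg, neg_mul, mul_neg]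
    match_scalars <;> first | ring1 | linear_combination hσ | linear_combination -hσ | linear_combination c*hσ | linear_combination (-c)*hσ | linear_combination (c*σ)*hσ | linear_combination (-(c*σ))*hσ
end Aux

private lemma aux_list_comm {K V : Type*} [Field K] [CharZero K] [AddCommGroup V] [Module K V]
    (q : QuadraticForm K V)
    (u : V) (l : List V) (h : ∀ w ∈ l, QuadraticMap.polar q u w = 0) :
    ι q u * (l.map (ι q)).prod = ((-1 : K) ^ l.length) • ((l.map (ι q)).prod * ι q u) := by
  induction l with
  | nil => simp
  | cons w l ih =>
    have h1 := aux_anticomm q (h w List.mem_cons_self)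
    have h2 := ih (fun w hw => h w (List.mem_cons_of_mem _ hw))
    simp only [List.map_cons, List.prod_cons, List.length_cons]
    rw [← mul_assoc, h1, neg_mul, mul_assoc, h2]
    simp [pow_succ, mul_smul_comm, mul_assoc]

private lemma aux_list_mem {K V : Type*} [Field K] [CharZero K] [AddCommGroup V] [Module K V]
    (q : QuadraticForm K V) (S : Set V) (l : List V) (h : ∀ w ∈ l, w ∈ S) :
    (l.map (ι q)).prod ∈ Algebra.adjoin K (ι q '' S) := by
  induction l with
  | nil => simpa using one_mem _
  | cons w l ih =>
    simp only [List.map_cons, List.prod_cons]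
    exact mul_mem (Algebra.subset_adjoin ⟨w, h w List.mem_cons_self, rfl⟩)
      (ih (fun w hw => h w (List.mem_cons_of_mem _ hw)))

private lemma aux_E_comm {K V : Type*} [Field K] [CharZero K] [AddCommGroup V] [Module K V]
    (q : QuadraticForm K V)
    (e : V) (S : Set V) (hS : ∀ w ∈ S, QuadraticMap.polar q e w = 0) :
    ∀ z ∈ Algebra.adjoin K (ι q '' S), ι q e * z = involute z * ι q e := by
  intro z hz
  induction hz using Algebra.adjoin_induction with
  | mem x hx =>
    obtain ⟨w, hw, rfl⟩ := hx
    rw [involute_ι, aux_anticomm q (hS w hw), neg_mul]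
  | algebraMap r => rw [involute.commutes, Algebra.commutes]
  | add x y hx hy ihx ihy => rw [map_add, mul_add, add_mul, ihx, ihy]
  | mul x y hx hy ihx ihy =>
      rw [map_mul, ← mul_assoc, ihx, mul_assoc, ihy, mul_assoc]


/-- contraction is a module homomorphism.  Let `dim V = 2(n+1)`,
`F` maximal isotropic with basis `f₁,…,f_{n+1}` chosen so that `(e|fᵢ) = δ_{i,n+1}`
for an isotropic vector `e ∉ F`, and set `f = f₁⋯f_{n+1}`, `f̄ = f₁⋯f_n`.  The
contraction `π_e : Cl(V)f → Cl(V_e)f̄` is defined on `Cl⁺(V)f` by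
`af ↦` (image in `Cl(V_e)f̄` of) `½((−1)^n e a f + a f e)` and on `Cl⁻(V)f` with sign
`(−1)^{n+1}`.  Then: (i) this expression indeed lies in `Cl(e^⊥)·f₁⋯f_n`, and
(ii) `π_e` is a homomorphism of `Cl(e^⊥)`-representations, i.e.
`π_e(v·(af)) = v̄·π_e(af)` for `v ∈ e^⊥`; at the level of representatives this is the
identity `½((−1)^n e(va)f + (va)fe) = v·½((−1)^{n+1} e a f + a f e)`. -/
theorem stmt8 {K V : Type*} [Field K] [IsAlgClosed K] [CharZero K]
    [AddCommGroup V] [Module K V] [FiniteDimensional K V]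
    (q : QuadraticForm K V) (n : ℕ)
    (hdim : Module.finrank K V = 2 * (n + 1))
    (hq : (QuadraticMap.polarBilin q).Nondegenerate)
    (f : Fin (n + 1) → V) (hf : LinearIndependent K f)
    (hff : ∀ i j, halfPolar q (f i) (f j) = 0)
    (e : V) (hqe : q e = 0)
    (hef : ∀ i, halfPolar q e (f i) = if i = Fin.last n then 1 else 0) :
    -- (ii) Cl(e^⊥)-equivariance of the contraction, at the level of representatives
    (∀ v : V, QuadraticMap.polar q e v = 0 → ∀ a : CliffordAlgebra q,
      (2⁻¹ : K) • (((-1 : K) ^ n) •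
            (ι q e * ((ι q v * a) * ((List.ofFn f).map (ι q)).prod))
          + (ι q v * a) * ((List.ofFn f).map (ι q)).prod * ι q e)
        = ι q v * ((2⁻¹ : K) • (((-1 : K) ^ (n + 1)) •
            (ι q e * (a * ((List.ofFn f).map (ι q)).prod))
          + a * ((List.ofFn f).map (ι q)).prod * ι q e))) ∧
    -- (i) the defining expression of π_e lies in Cl(e^⊥)·f₁⋯f_n,
    -- for the even half-spin representation …
    (∀ a ∈ evenOdd q 0,
      ∃ x ∈ Algebra.adjoin K (ι q '' {w : V | QuadraticMap.polar q e w = 0}),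
        (2⁻¹ : K) • (((-1 : K) ^ n) •
              (ι q e * (a * ((List.ofFn f).map (ι q)).prod))
            + a * ((List.ofFn f).map (ι q)).prod * ι q e)
          = x * ((List.ofFn (fun i : Fin n => f i.castSucc)).map (ι q)).prod) ∧
    -- … and for the odd one
    (∀ a ∈ evenOdd q 1,
      ∃ x ∈ Algebra.adjoin K (ι q '' {w : V | QuadraticMap.polar q e w = 0}),
        (2⁻¹ : K) • (((-1 : K) ^ (n + 1)) •
              (ι q e * (a * ((List.ofFn f).map (ι q)).prod))
            + a * ((List.ofFn f).map (ι q)).prod * ι q e)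
          = x * ((List.ofFn (fun i : Fin n => f i.castSucc)).map (ι q)).prod) := by
  classical
  set S : Set V := {w : V | QuadraticMap.polar q e w = 0} with hSdef
  have hhalf : ∀ u w : V, halfPolar q u w = 2⁻¹ * QuadraticMap.polar q u w := by
    intro u w
    simp [halfPolar, QuadraticMap.polarBilin_apply_apply, smul_eq_mul]
  have hpef : QuadraticMap.polar q e (f (Fin.last n)) = 2 := by
    have h := hef (Fin.last n)
    rw [if_pos rfl, hhalf] at h
    linear_combination (2:K) * h
  have hpef0 : ∀ i : Fin (n+1), i ≠ Fin.last n → QuadraticMap.polar q e (f i) = 0 := by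
    intro i hi
    have h := hef i
    rw [if_neg hi, hhalf] at h
    have h2 : (2⁻¹ : K) ≠ 0 := by norm_num
    exact (mul_eq_zero.mp h).resolve_left h2
  have hpff : ∀ i j, QuadraticMap.polar q (f i) (f j) = 0 := by
    intro i j
    have h := hff i j
    rw [hhalf] at h
    have h2 : (2⁻¹ : K) ≠ 0 := by norm_num
    exact (mul_eq_zero.mp h).resolve_left h2
  have hqf : ∀ i, q (f i) = 0 := by
    intro i
    have h := hpff i i
    rw [QuadraticMap.polar_self, two_smul] at h
    have := add_self_eq_zero.mp h
    exact this
  have hFF : ι q (f (Fin.last n)) * ι q (f (Fin.last n)) = 0 := by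
    rw [ι_sq_scalar, hqf, map_zero]
  have hEF : ι q e * ι q (f (Fin.last n)) + ι q (f (Fin.last n)) * ι q e
      = algebraMap K _ 2 := by
    rw [ι_mul_ι_add_swap, hpef]
  have hdecomp : ∀ m : V, ∃ w : V, QuadraticMap.polar q e w = 0 ∧
      ι q m = ι q w + (2⁻¹ * QuadraticMap.polar q e m) • ι q (f (Fin.last n)) := by
    intro m
    refine ⟨m - (2⁻¹ * QuadraticMap.polar q e m) • f (Fin.last n), ?_, ?_⟩
    · rw [QuadraticMap.polar_sub_right, QuadraticMap.polar_smul_right, hpef, smul_eq_mul]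
      field_simp
      ring
    · rw [map_sub, map_smul]
      abel
  set Qb := ((List.ofFn fun i : Fin n => f i.castSucc).map (ι q)).prod with hQbdef
  have hlen : (List.ofFn fun i : Fin n => f i.castSucc).length = n := by simp
  have hmemS : ∀ w ∈ List.ofFn fun i : Fin n => f i.castSucc,
      QuadraticMap.polar q e w = 0 := by
    intro w hw
    rw [List.mem_ofFn] at hw
    obtain ⟨i, rfl⟩ := hw
    exact hpef0 _ (Fin.castSucc_lt_last i).ne
  have hQbX : Qb ∈ Algebra.adjoin K (ι q '' S) :=
    aux_list_mem q S _ (fun w hw => hmemS w hw)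
  have hαQ : involute Qb = ((-1:K)^n) • Qb := by
    have h := involute_prod_map_ι (Q := q) (List.ofFn fun i : Fin n => f i.castSucc)
    rwa [hlen] at h
  have hFQ : ι q (f (Fin.last n)) * Qb = ((-1:K)^n) • (Qb * ι q (f (Fin.last n))) := by
    have h := aux_list_comm q (f (Fin.last n)) (List.ofFn fun i : Fin n => f i.castSucc)
      (fun w hw => by
        rw [List.mem_ofFn] at hw
        obtain ⟨i, rfl⟩ := hw
        exact hpff _ _)
    rwa [hlen] at h
  have hE : ∀ z ∈ Algebra.adjoin K (ι q '' S), ι q e * z = involute z * ι q e :=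
    aux_E_comm q e S (fun w hw => hw)
  have hP : ((List.ofFn f).map (ι q)).prod = Qb * ι q (f (Fin.last n)) := by
    rw [List.ofFn_succ', List.map_concat, List.prod_concat]
  -- the two-vector step, with generic sign
  have step2 : ∀ (σ : K), σ * σ = 1 → ∀ (m₁ m₂ : V) (a : CliffordAlgebra q),
      (∃ x y, x ∈ Algebra.adjoin K (ι q '' S) ∧ y ∈ Algebra.adjoin K (ι q '' S) ∧
        a = x + y * ι q (f (Fin.last n)) ∧ involute x = σ • x ∧ involute y = (-σ) • y) →
      (∃ x y, x ∈ Algebra.adjoin K (ι q '' S) ∧ y ∈ Algebra.adjoin K (ι q '' S) ∧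
        ι q m₁ * ι q m₂ * a = x + y * ι q (f (Fin.last n)) ∧
        involute x = σ • x ∧ involute y = (-σ) • y) := by
    intro σ hσ m₁ m₂ a ⟨x, y, hx, hy, hexp, hax, hay⟩
    obtain ⟨w₂, hw₂, hm₂⟩ := hdecomp m₂
    obtain ⟨w₁, hw₁, hm₁⟩ := hdecomp m₁
    obtain ⟨x₂, y₂, hx₂, hy₂, heq₂, hax₂, hay₂⟩ :=
      aux_step q e (f (Fin.last n)) hFF σ (2⁻¹ * QuadraticMap.polar q e m₂) hσ hx hy hax hay hw₂
    have hσ' : (-σ) * (-σ) = 1 := by rw [neg_mul_neg]; exact hσ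
    have hay₂' : involute y₂ = (-(-σ)) • y₂ := by rw [neg_neg]; exact hay₂
    obtain ⟨x₁, y₁, hx₁, hy₁, heq₁, hax₁, hay₁⟩ :=
      aux_step q e (f (Fin.last n)) hFF (-σ) (2⁻¹ * QuadraticMap.polar q e m₁) hσ' hx₂ hy₂
        hax₂ hay₂' hw₁
    refine ⟨x₁, y₁, hx₁, hy₁, ?_, ?_, hay₁⟩
    · calc ι q m₁ * ι q m₂ * a
          = (ι q w₁ + (2⁻¹ * QuadraticMap.polar q e m₁) • ι q (f (Fin.last n)))
            * ((ι q w₂ + (2⁻¹ * QuadraticMap.polar q e m₂) • ι q (f (Fin.last n)))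
              * (x + y * ι q (f (Fin.last n)))) := by
            rw [mul_assoc, ← hm₁, ← hm₂, ← hexp]
      _ = (ι q w₁ + (2⁻¹ * QuadraticMap.polar q e m₁) • ι q (f (Fin.last n)))
            * (x₂ + y₂ * ι q (f (Fin.last n))) := by rw [heq₂]
      _ = x₁ + y₁ * ι q (f (Fin.last n)) := heq₁
    · rw [hax₁, neg_neg]
  -- the even/odd decomposition
  have heven : ∀ a, a ∈ evenOdd q 0 →
      ∃ x y, x ∈ Algebra.adjoin K (ι q '' S) ∧ y ∈ Algebra.adjoin K (ι q '' S) ∧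
        a = x + y * ι q (f (Fin.last n)) ∧
        involute x = (1:K) • x ∧ involute y = (-(1:K)) • y := by
    intro a ha
    induction a, ha using even_induction with
    | algebraMap r =>
      exact ⟨algebraMap K _ r, 0, algebraMap_mem _ _, zero_mem _, by simp,
        by rw [involute.commutes, one_smul], by simp⟩
    | add a b ha hb iha ihb =>
      obtain ⟨x₁, y₁, hx₁, hy₁, he₁, ha₁, hb₁⟩ := iha
      obtain ⟨x₂, y₂, hx₂, hy₂, he₂, ha₂, hb₂⟩ := ihb
      exact ⟨x₁ + x₂, y₁ + y₂, add_mem hx₁ hx₂, add_mem hy₁ hy₂,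
        by rw [he₁, he₂, add_mul]; abel,
        by rw [map_add, ha₁, ha₂, smul_add],
        by rw [map_add, hb₁, hb₂, smul_add]⟩
    | ι_mul_ι_mul m₁ m₂ a ha ih =>
      exact step2 1 (by norm_num) m₁ m₂ a ih
  have hodd : ∀ a, a ∈ evenOdd q 1 →
      ∃ x y, x ∈ Algebra.adjoin K (ι q '' S) ∧ y ∈ Algebra.adjoin K (ι q '' S) ∧
        a = x + y * ι q (f (Fin.last n)) ∧
        involute x = (-(1:K)) • x ∧ involute y = (-(-(1:K))) • y := by
    intro a ha
    induction a, ha using odd_induction with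
    | ι m =>
      obtain ⟨w, hw, hm⟩ := hdecomp m
      refine ⟨ι q w, algebraMap K _ (2⁻¹ * QuadraticMap.polar q e m),
        Algebra.subset_adjoin ⟨w, hw, rfl⟩, algebraMap_mem _ _, ?_, ?_, ?_⟩
      · rw [hm, ← Algebra.smul_def]
      · rw [involute_ι, neg_one_smul]
      · rw [involute.commutes, neg_neg, one_smul]
    | add a b ha hb iha ihb =>
      obtain ⟨x₁, y₁, hx₁, hy₁, he₁, ha₁, hb₁⟩ := iha
      obtain ⟨x₂, y₂, hx₂, hy₂, he₂, ha₂, hb₂⟩ := ihb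
      exact ⟨x₁ + x₂, y₁ + y₂, add_mem hx₁ hx₂, add_mem hy₁ hy₂,
        by rw [he₁, he₂, add_mul]; abel,
        by rw [map_add, ha₁, ha₂, smul_add],
        by rw [map_add, hb₁, hb₂, smul_add]⟩
    | ι_mul_ι_mul m₁ m₂ a ha ih =>
      exact step2 (-(1:K)) (by norm_num) m₁ m₂ a ih
  -- the final computation
  have final : ∀ (σ : K) (x y : CliffordAlgebra q),
      x ∈ Algebra.adjoin K (ι q '' S) → involute x = σ • x → σ * σ = 1 →
      (2⁻¹ : K) • ((σ * (-1:K)^n) •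
          (ι q e * ((x + y * ι q (f (Fin.last n))) * (Qb * ι q (f (Fin.last n)))))
        + (x + y * ι q (f (Fin.last n))) * (Qb * ι q (f (Fin.last n))) * ι q e)
      = x * Qb := by
    intro σ x y hx hax hσ
    have h1 : (x + y * ι q (f (Fin.last n))) * (Qb * ι q (f (Fin.last n)))
        = x * Qb * ι q (f (Fin.last n)) := by
      have h0 : y * ι q (f (Fin.last n)) * (Qb * ι q (f (Fin.last n))) = 0 := by
        calc y * ι q (f (Fin.last n)) * (Qb * ι q (f (Fin.last n)))
            = y * ((ι q (f (Fin.last n)) * Qb) * ι q (f (Fin.last n))) := by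
              rw [mul_assoc, mul_assoc]
          _ = ((-1:K)^n) • (y * (Qb * (ι q (f (Fin.last n)) * ι q (f (Fin.last n))))) := by
              rw [hFQ]
              simp only [smul_mul_assoc, mul_smul_comm, mul_assoc]
          _ = 0 := by rw [hFF]; simp
      rw [add_mul, h0, add_zero, mul_assoc]
    rw [h1]
    have h2 : ι q e * (x * Qb) = (σ * (-1:K)^n) • (x * Qb * ι q e) := by
      rw [hE _ (mul_mem hx hQbX), map_mul, hax, hαQ]
      simp only [smul_mul_assoc, mul_smul_comm, smul_smul]
      match_scalars <;> ring1
    have h3 : ι q e * (x * Qb * ι q (f (Fin.last n)))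
        = (σ * (-1:K)^n) • (x * Qb * (ι q e * ι q (f (Fin.last n)))) := by
      rw [← mul_assoc, h2]
      simp only [smul_mul_assoc, mul_assoc]
    have h4 : x * Qb * ι q (f (Fin.last n)) * ι q e
        = (2:K) • (x * Qb) - x * Qb * (ι q e * ι q (f (Fin.last n))) := by
      have h5 : ι q (f (Fin.last n)) * ι q e
          = algebraMap K _ 2 - ι q e * ι q (f (Fin.last n)) := by
        rw [← hEF]; abel
      rw [mul_assoc, h5, mul_sub, ← Algebra.commutes, ← Algebra.smul_def]
    rw [h3, h4, smul_smul]
    have h6 : ((-1:K)^n) * ((-1:K)^n) = 1 := by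
      rw [← pow_add]
      exact Even.neg_one_pow ⟨n, rfl⟩
    have hss : (σ * (-1:K)^n) * (σ * (-1:K)^n) = 1 := by
      linear_combination ((-1:K)^n * (-1:K)^n) * hσ + h6
    rw [hss, one_smul]
    match_scalars <;> ring1
  refine ⟨?_, ?_, ?_⟩
  · -- part (ii)
    intro v hv a
    have hEW : ι q e * ι q v = -(ι q v * ι q e) := aux_anticomm q hv
    have h1 : ι q e * (ι q v * (a * ((List.ofFn f).map (ι q)).prod))
        = -(ι q v * (ι q e * (a * ((List.ofFn f).map (ι q)).prod))) := by
      rw [← mul_assoc, hEW, neg_mul, mul_assoc]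
    simp only [mul_assoc]
    rw [h1]
    simp only [pow_succ, mul_add, mul_smul_comm, smul_add, smul_smul, smul_neg,
      neg_smul, mul_neg, mul_one]
  · -- part (i), even
    intro a ha
    obtain ⟨x, y, hx, hy, hexp, hax, hay⟩ := heven a ha
    refine ⟨x, hx, ?_⟩
    have h := final 1 x y hx hax (by norm_num)
    rw [one_mul] at h
    rw [hexp, hP]
    exact h
  · -- part (i), odd
    intro a ha
    obtain ⟨x, y, hx, hy, hexp, hax, hay⟩ := hodd a ha
    refine ⟨x, hx, ?_⟩
    have h := final (-(1:K)) x y hx hax (by norm_num)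
    have hsgn : ((-1:K))^(n+1) = (-(1:K)) * (-1:K)^n := by ring
    rw [hexp, hP, hsgn]
    exact h
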